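/- (Sum of tokens) Let d_embed = 5, M > 0, and x = (x¹,…,x^D) ∈ ℝ^D with ‖x‖_∞ ≤ M. Let H ∈ ℝ^{5×ℓ} with ℓ ≥ D+1 be the embedding matrix whose first row is (x¹,…,x^D, 0,…,0), second row zero, rows 3–4 the positional encodings, and fifth row all ones. Then there exists a transformer block B ∈ 𝓑(D, 6, d_embed) such that B(H) equals H except that the (1, D+1) entry is x¹ + ⋯ + x^D, with weight bound ‖θ_B‖_∞ ≤ O(ℓ² M² ‖H‖²_{∞,∞}). -/

import Mathlib

open scoped BigOperators
open Metric Set MeasureTheory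
open scoped Matrix

namespace Paper

noncomputable section

/-- ReLU activation. -/
def relu (x : ℝ) : ℝ := max x 0

/-- Euclidean space `ℝ^D` with the `ℓ²` norm. -/
abbrev Euc (D : ℕ) := EuclideanSpace ℝ (Fin D)

/-- Maximum absolute entry of a matrix (`‖H‖_{∞,∞}`). -/
def matSup {m n : ℕ} (H : Matrix (Fin m) (Fin n) ℝ) : ℝ := ⨆ i, ⨆ j, |H i j|

/-- Sup norm `‖x‖_∞` of a vector. -/
def supNorm {D : ℕ} (x : Fin D → ℝ) : ℝ := ⨆ i, |x i|

/-- An attention head: query, key and value matrices. -/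
structure Head (de : ℕ) where
  Q : Matrix (Fin de) (Fin de) ℝ
  K : Matrix (Fin de) (Fin de) ℝ
  V : Matrix (Fin de) (Fin de) ℝ

/-- Action of an attention head on an embedding matrix:
`A(H) = V H σ((K H)ᵀ Q H)` with `σ = ReLU`. -/
def Head.eval {de : ℕ} (A : Head de) {ℓ : ℕ} (H : Matrix (Fin de) (Fin ℓ) ℝ) :
    Matrix (Fin de) (Fin ℓ) ℝ :=
  A.V * H * ((A.K * H)ᵀ * (A.Q * H)).map relu

/-- Tokenwise action of an attention head:
`A(h_t) = Σ_j σ(⟨Q h_t, K h_j⟩) V h_j`. -/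
def Head.tokenEval {de ℓ : ℕ} (A : Head de) (H : Matrix (Fin de) (Fin ℓ) ℝ)
    (t : Fin ℓ) : Fin de → ℝ := fun i =>
  ∑ j : Fin ℓ,
    relu (∑ k, A.Q.mulVec (fun r => H r t) k * A.K.mulVec (fun r => H r j) k) *
      A.V.mulVec (fun r => H r j) i

/-- Maximum weight magnitude of an attention head. -/
def Head.wnorm {de : ℕ} (A : Head de) : ℝ := matSup A.Q ⊔ matSup A.K ⊔ matSup A.V

/-- A fully-connected (tokenwise) ReLU feed-forward network of depth `L`
and hidden width `w` on embedding dimension `de`. -/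
structure FFN (de w L : ℕ) where
  Win : Matrix (Fin w) (Fin de) ℝ
  bin : Fin w → ℝ
  Wmid : Fin L → Matrix (Fin w) (Fin w) ℝ
  bmid : Fin L → Fin w → ℝ
  Wout : Matrix (Fin de) (Fin w) ℝ
  bout : Fin de → ℝ

/-- Evaluation of a feed-forward ReLU network on one token. -/
def FFN.eval {de w L : ℕ} (f : FFN de w L) (x : Fin de → ℝ) : Fin de → ℝ :=
  let h0 : Fin w → ℝ := fun i => relu (∑ j, f.Win i j * x j + f.bin i)
  let hL : Fin w → ℝ := (List.finRange L).foldl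
    (fun h k => fun i => relu (∑ j, f.Wmid k i j * h j + f.bmid k i)) h0
  fun i => ∑ j, f.Wout i j * hL j + f.bout i

/-- Maximum weight magnitude of a feed-forward network. -/
def FFN.wnorm {de w L : ℕ} (f : FFN de w L) : ℝ :=
  matSup f.Win ⊔ (⨆ i, |f.bin i|) ⊔ (⨆ k, matSup (f.Wmid k)) ⊔
    (⨆ k, ⨆ i, |f.bmid k i|) ⊔ matSup f.Wout ⊔ (⨆ i, |f.bout i|)

/-- A two-layer feed-forward ReLU network. -/
structure TwoLayerFFN (de w : ℕ) where
  W1 : Matrix (Fin w) (Fin de) ℝ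
  b1 : Fin w → ℝ
  W2 : Matrix (Fin de) (Fin w) ℝ
  b2 : Fin de → ℝ

def TwoLayerFFN.eval {de w : ℕ} (f : TwoLayerFFN de w) (x : Fin de → ℝ) :
    Fin de → ℝ := fun i =>
  ∑ j, f.W2 i j * relu (∑ k, f.W1 j k * x k + f.b1 j) + f.b2 i

def TwoLayerFFN.wnorm {de w : ℕ} (f : TwoLayerFFN de w) : ℝ :=
  matSup f.W1 ⊔ (⨆ i, |f.b1 i|) ⊔ matSup f.W2 ⊔ (⨆ i, |f.b2 i|)

/-- A transformer block `B(H) = FFN(MHA(H)+H) + MHA(H) + H` with `m` attention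
heads and a tokenwise feed-forward network of depth `L` and width `w`;
this formalizes the class `𝓑(m, L, de)`. -/
structure Block (de m w L : ℕ) where
  heads : Fin m → Head de
  ffn : FFN de w L

def Block.eval {de m w L : ℕ} (B : Block de m w L) {ℓ : ℕ}
    (H : Matrix (Fin de) (Fin ℓ) ℝ) : Matrix (Fin de) (Fin ℓ) ℝ :=
  let H1 := (∑ j, (B.heads j).eval H) + H
  Matrix.of (fun i t => B.ffn.eval (fun r => H1 r t) i) + H1

def Block.wnorm {de m w L : ℕ} (B : Block de m w L) : ℝ :=
  (⨆ j, (B.heads j).wnorm) ⊔ B.ffn.wnorm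

/-- A transformer network: linear embedding, positional encoding, `LT` transformer
blocks (each with `mT` heads and FFNs of depth `LF`, width `wF`), and a decoding
layer returning the first entry of the last column. -/
structure TransformerNet (D LT mT de ℓ LF wF : ℕ) where
  emb : Fin de → Fin ℓ → Fin D → ℝ
  PE : Matrix (Fin de) (Fin ℓ) ℝ
  blocks : Fin LT → Block de mT wF LF

def TransformerNet.eval {D LT mT de ℓ LF wF : ℕ}
    (T : TransformerNet D LT mT de ℓ LF wF) (x : Fin D → ℝ) : ℝ :=
  let H0 : Matrix (Fin de) (Fin ℓ) ℝ :=
    T.PE + Matrix.of fun i t => ∑ j, T.emb i t j * x j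
  let HL := (List.finRange LT).foldl (fun H k => (T.blocks k).eval H) H0
  if h : 0 < de ∧ 0 < ℓ then HL ⟨0, h.1⟩ ⟨ℓ - 1, Nat.sub_lt h.2 Nat.one_pos⟩ else 0

/-- Maximum weight magnitude `‖θ‖_∞` of a transformer network. -/
def TransformerNet.wnorm {D LT mT de ℓ LF wF : ℕ}
    (T : TransformerNet D LT mT de ℓ LF wF) : ℝ :=
  (⨆ i, ⨆ t, ⨆ j, |T.emb i t j|) ⊔ matSup T.PE ⊔ (⨆ k, (T.blocks k).wnorm)

/-- Membership in the transformer class `𝒯(L_T, m_T, d_embed, ℓ, L_FFN, w_FFN, R, κ)`: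
sup-norm output bound `R` and weight magnitudes at most `κ`. -/
def TransformerNet.inClass {D LT mT de ℓ LF wF : ℕ}
    (T : TransformerNet D LT mT de ℓ LF wF) (R κ : ℝ) : Prop :=
  (∀ x : Fin D → ℝ, |T.eval x| ≤ R) ∧ T.wnorm ≤ κ

/-- Medial axis of a set. -/
def medialAxis {D : ℕ} (S : Set (Euc D)) : Set (Euc D) :=
  {x | ∃ p ∈ S, ∃ q ∈ S, p ≠ q ∧
    dist p x = infDist x S ∧ dist q x = infDist x S}

/-- Local reach `τ_M(v)`. -/
def localReach {D : ℕ} (S : Set (Euc D)) (v : Euc D) : ℝ :=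
  infDist v (medialAxis S)

/-- Reach `τ_M` of a set. -/
def reach {D : ℕ} (S : Set (Euc D)) : ℝ := ⨅ v ∈ S, localReach S v

/-- Geodesic distance on `S`: infimum of lengths of `C¹` curves in `S`. -/
def geoDist {D : ℕ} (S : Set (Euc D)) (v v' : Euc D) : ℝ :=
  sInf {l : ℝ | ∃ γ : ℝ → Euc D, (∀ t ∈ Icc (0:ℝ) 1, γ t ∈ S) ∧
    ContDiffOn ℝ 1 γ (Icc 0 1) ∧ γ 0 = v ∧ γ 1 = v' ∧
    l = ∫ t in (0:ℝ)..1, ‖deriv γ t‖}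

/-- Orthogonal projection onto `S` (a choice of nearest point, when one exists). -/
def projOn {D : ℕ} (S : Set (Euc D)) (x : Euc D) : Euc D :=
  Classical.epsilon fun y => y ∈ S ∧ dist x y = infDist x S

/-- A nonempty, compact, connected `d`-dimensional manifold `M ⊆ [0,1]^D`,
together with a choice of orthonormal tangent frames `P(v)`. -/
structure GoodManifold (D d : ℕ) where
  carrier : Set (Euc D)
  nonempty : carrier.Nonempty
  compact : IsCompact carrier
  connected : IsConnected carrier
  subset_cube : ∀ x ∈ carrier, ∀ i, x i ∈ Icc (0:ℝ) 1
  locallyEuclidean : ∀ v ∈ carrier, ∃ U : Set (Euc D), IsOpen U ∧ v ∈ U ∧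
    ∃ V : Set (EuclideanSpace ℝ (Fin d)), IsOpen V ∧
      Nonempty (↥(carrier ∩ U) ≃ₜ ↥V)
  frame : Euc D → Matrix (Fin D) (Fin d) ℝ
  frame_orthonormal : ∀ v ∈ carrier, (frame v)ᵀ * frame v = 1

/-- The tubular region `M(q)` around the manifold. -/
def GoodManifold.tube {D d : ℕ} (M : GoodManifold D d) (q : ℝ) : Set (Euc D) :=
  {x | ∃ v ∈ M.carrier, ∃ u : Euc D, x = v + u ∧
    (M.frame v)ᵀ.mulVec (fun i => u i) = 0 ∧
    ‖u‖ < q * localReach M.carrier v}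

/-- The volume `Vol(M)`: the `d`-dimensional Hausdorff measure of the carrier. -/
def vol {D d : ℕ} (M : GoodManifold D d) : ℝ :=
  (MeasureTheory.Measure.hausdorffMeasure (d : ℝ) M.carrier).toReal

/-- A maximal `δ`-separated net `{z₁,…,z_K}` of `M` w.r.t. geodesic distance. -/
structure SepNet {D d : ℕ} (M : GoodManifold D d) (δ : ℝ) (K : ℕ) where
  z : Fin K → Euc D
  mem : ∀ i, z i ∈ M.carrier
  sep : ∀ i j, i ≠ j → δ < geoDist M.carrier (z i) (z j)
  maximal : ∀ y ∈ M.carrier, ∃ i, geoDist M.carrier y (z i) ≤ δ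

/-- The bump functions `η̃_i` built from the net, with `p = (1+q)/2` and
`h = 6/(1 - q p⁻¹)`. -/
def etaTilde {D d K : ℕ} (M : GoodManifold D d) (q δ : ℝ) (N : SepNet M δ K)
    (i : Fin K) (x : Euc D) : ℝ :=
  relu (1 - (dist x (N.z i) / (((1 + q) / 2) * localReach M.carrier (N.z i))) ^ 2
    - (Real.sqrt (∑ j, (∑ r, M.frame (N.z i) r j * (x r - N.z i r)) ^ 2)
        / ((6 / (1 - q / ((1 + q) / 2))) * δ)) ^ 2)

/-- The normalized partition of unity `η_i = η̃_i / ‖η̃‖₁`. -/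
def etaFun {D d K : ℕ} (M : GoodManifold D d) (q δ : ℝ) (N : SepNet M δ K)
    (i : Fin K) (x : Euc D) : ℝ :=
  etaTilde M q δ N i x / ∑ j, etaTilde M q δ N j x

/-- Embedding matrix predicate for `d_embed = 5`: second row zero, rows 3–4 the
sinusoidal positional encodings, fifth row all ones. -/
def IsEmbed5 {ℓ : ℕ} (H : Matrix (Fin 5) (Fin ℓ) ℝ) : Prop :=
  (∀ t, H 1 t = 0) ∧
  (∀ t : Fin ℓ, H 2 t = Real.cos ((((t : ℕ) : ℝ) + 1) * Real.pi / (2 * ℓ))) ∧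
  (∀ t : Fin ℓ, H 3 t = Real.sin ((((t : ℕ) : ℝ) + 1) * Real.pi / (2 * ℓ))) ∧
  (∀ t, H 4 t = 1)

/-- Embedding matrix predicate for general `d_embed = e + 5 ≥ 5`: rows
`d_embed−2, d_embed−1` are the positional encodings and the last row is all ones. -/
def IsEmbedG (e ℓ : ℕ) (H : Matrix (Fin (e + 5)) (Fin ℓ) ℝ) : Prop :=
  (∀ t : Fin ℓ, H ⟨e + 2, by omega⟩ t
      = Real.cos ((((t : ℕ) : ℝ) + 1) * Real.pi / (2 * ℓ))) ∧
  (∀ t : Fin ℓ, H ⟨e + 3, by omega⟩ t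
      = Real.sin ((((t : ℕ) : ℝ) + 1) * Real.pi / (2 * ℓ))) ∧
  (∀ t, H ⟨e + 4, by omega⟩ t = 1)


lemma relu_of_nonpos {a : ℝ} (h : a ≤ 0) : relu a = 0 := max_eq_right h
lemma relu_of_nonneg {a : ℝ} (h : 0 ≤ a) : relu a = a := max_eq_left h
lemma relu_nonneg (a : ℝ) : 0 ≤ relu a := le_max_right a 0

lemma foldl_relu_mul (κ : ℝ) (hκ : 0 ≤ κ) {w : ℕ} :
    ∀ (l : List (Fin 6)) (h0 : Fin w → ℝ), (∀ i, 0 ≤ h0 i) →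
      l.foldl (fun h (_ : Fin 6) => fun i => relu (κ * h i)) h0
        = fun i => κ ^ l.length * h0 i := by
  intro l
  induction l with
  | nil => intro h0 _; funext i; simp
  | cons a l ih =>
    intro h0 h0n
    rw [List.foldl_cons, ih _ (fun i => relu_nonneg _)]
    funext i
    rw [relu_of_nonneg (mul_nonneg hκ (h0n i))]
    rw [List.length_cons, pow_succ]
    ring

lemma ffn_eval_eq {de w : ℕ} (k0 : ℝ) (hk0 : 0 ≤ k0)
    (Win : Matrix (Fin w) (Fin de) ℝ) (Wout : Matrix (Fin de) (Fin w) ℝ)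
    (y : Fin de → ℝ) (i : Fin de) :
    FFN.eval (⟨Win, 0, fun _ => k0 • 1, 0, Wout, 0⟩ : FFN de w 6) y i
      = ∑ j, Wout i j * (k0 ^ 6 * relu (∑ r, Win j r * y r)) := by
  show (∑ j, Wout i j * ((List.finRange 6).foldl
      (fun h k => fun i' => relu (∑ j', (k0 • (1 : Matrix (Fin w) (Fin w) ℝ)) i' j' * h j'
        + (0 : Fin 6 → Fin w → ℝ) k i'))
      (fun i' => relu (∑ j', Win i' j' * y j' + (0 : Fin w → ℝ) i')) j)
      + (0 : Fin de → ℝ) i) = _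
  have hstep : (fun (h : Fin w → ℝ) (k : Fin 6) => fun i' =>
        relu (∑ j', (k0 • (1 : Matrix (Fin w) (Fin w) ℝ)) i' j' * h j'
          + (0 : Fin 6 → Fin w → ℝ) k i'))
      = fun h (_ : Fin 6) => fun i' => relu (k0 * h i') := by
    funext h k i'
    congr 1
    simp [Matrix.smul_apply, Matrix.one_apply, ite_mul, mul_ite,
      Finset.sum_ite_eq, mul_assoc]
  rw [hstep, foldl_relu_mul k0 hk0 _ _ (fun i' => relu_nonneg _)]
  simp [List.length_finRange]

lemma head_entry {ℓ : ℕ} (k0 cD sD cΔ : ℝ) (H : Matrix (Fin 5) (Fin ℓ) ℝ)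
    (h4 : ∀ t, H 4 t = 1) (i : Fin 5) (t : Fin ℓ) :
    Head.eval (⟨Matrix.of fun i' j => if i' = 0 then (![0,0,k0*cD,k0*sD,-(k0*cΔ)]) j else 0,
               Matrix.of fun i' j => if i' = 0 ∧ j = 4 then k0 else 0,
               Matrix.of fun i' j => if i' = 0 ∧ j = 0 then k0 else 0⟩ : Head 5) H i t
    = (if i = 0 then k0 * (∑ s, H 0 s) else 0) *
        relu (k0 * (k0*cD * H 2 t + k0*sD * H 3 t - k0*cΔ)) := by
  set Qm : Matrix (Fin 5) (Fin 5) ℝ :=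
    Matrix.of fun i' j => if i' = 0 then (![0,0,k0*cD,k0*sD,-(k0*cΔ)]) j else 0 with hQm
  set Km : Matrix (Fin 5) (Fin 5) ℝ :=
    Matrix.of fun i' j => if i' = 0 ∧ j = 4 then k0 else 0 with hKm
  set Vm : Matrix (Fin 5) (Fin 5) ℝ :=
    Matrix.of fun i' j => if i' = 0 ∧ j = 0 then k0 else 0 with hVm
  have hVH : ∀ (i' : Fin 5) (s : Fin ℓ),
      (Vm * H) i' s = if i' = 0 then k0 * H 0 s else 0 := by
    intro i' s
    rw [Matrix.mul_apply, Fin.sum_univ_five]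
    by_cases hi : i' = 0 <;> simp [hVm, hi]
  have hKH : ∀ (k : Fin 5) (s : Fin ℓ),
      (Km * H) k s = if k = 0 then k0 else 0 := by
    intro k s
    rw [Matrix.mul_apply, Fin.sum_univ_five]
    by_cases hk : k = 0 <;> simp [hKm, hk, h4 s]
  have hQH : ∀ (k : Fin 5) (t' : Fin ℓ),
      (Qm * H) k t' = if k = 0 then k0*cD * H 2 t' + k0*sD * H 3 t' - k0*cΔ * H 4 t' else 0 := by
    intro k t'
    rw [Matrix.mul_apply, Fin.sum_univ_five]
    by_cases hk : k = 0 <;> simp [hQm, hk] <;> ring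
  have hR : ∀ (s : Fin ℓ) (t' : Fin ℓ),
      ((Km * H)ᵀ * (Qm * H)) s t' = k0 * (k0*cD * H 2 t' + k0*sD * H 3 t' - k0*cΔ) := by
    intro s t'
    rw [Matrix.mul_apply, Fin.sum_univ_five]
    simp [Matrix.transpose_apply, hKH, hQH, h4 t']
  show (Vm * H * ((Km * H)ᵀ * (Qm * H)).map relu) i t = _
  rw [Matrix.mul_apply]
  have : ∀ s : Fin ℓ, (Vm * H) i s * (((Km * H)ᵀ * (Qm * H)).map relu) s t
      = (if i = 0 then k0 * H 0 s else 0) *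
        relu (k0 * (k0*cD * H 2 t + k0*sD * H 3 t - k0*cΔ)) := by
    intro s
    rw [Matrix.map_apply, hVH, hR]
  rw [Finset.sum_congr rfl fun s _ => this s]
  rw [← Finset.sum_mul]
  congr 1
  by_cases hi : i = 0 <;> simp [hi, Finset.mul_sum]

lemma relu_sub_neg (a : ℝ) : relu a - relu (-a) = a := by
  rcases le_total a 0 with h | h
  · rw [relu_of_nonpos h, relu_of_nonneg (by linarith)]; ring
  · rw [relu_of_nonneg h, relu_of_nonpos (by linarith)]; ring

lemma matSup_le' {m n : ℕ} (H : Matrix (Fin m) (Fin n) ℝ) (c : ℝ) (hc : 0 ≤ c)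
    (h : ∀ i j, |H i j| ≤ c) : matSup H ≤ c := by
  unfold matSup
  rcases Nat.eq_zero_or_pos m with hm | hm
  · subst hm; rw [Real.iSup_of_isEmpty]; exact hc
  · have : Nonempty (Fin m) := ⟨⟨0, hm⟩⟩
    refine ciSup_le fun i => ?_
    rcases Nat.eq_zero_or_pos n with hn | hn
    · subst hn; rw [Real.iSup_of_isEmpty]; exact hc
    · have : Nonempty (Fin n) := ⟨⟨0, hn⟩⟩
      exact ciSup_le fun j => h i j

lemma iSup_abs_le {n : ℕ} (b : Fin n → ℝ) (c : ℝ) (hc : 0 ≤ c)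
    (h : ∀ i, |b i| ≤ c) : (⨆ i, |b i|) ≤ c := by
  rcases Nat.eq_zero_or_pos n with hn | hn
  · subst hn; rw [Real.iSup_of_isEmpty]; exact hc
  · have : Nonempty (Fin n) := ⟨⟨0, hn⟩⟩
    exact ciSup_le h

lemma sum_split (N : ℕ) (a b : ℝ) :
    ∑ j : Fin (N + N), (if (j : ℕ) < N then a else b) = N * a + N * b := by
  rw [Fin.sum_univ_add]
  have e1 : ∀ i : Fin N, (if ((Fin.castAdd N i : Fin (N+N)) : ℕ) < N then a else b) = a :=
    fun i => if_pos (by simpa using i.isLt)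
  have e2 : ∀ i : Fin N, (if ((Fin.natAdd N i : Fin (N+N)) : ℕ) < N then a else b) = b :=
    fun i => if_neg (by simp)
  rw [Finset.sum_congr rfl fun i _ => e1 i, Finset.sum_congr rfl fun i _ => e2 i]
  simp [Finset.sum_const, mul_comm]

lemma row_sum {ℓ D : ℕ} (hD : D < ℓ) (x : Fin D → ℝ) (H : Matrix (Fin 5) (Fin ℓ) ℝ)
    (hx1 : ∀ t : Fin ℓ, ∀ h : (t : ℕ) < D, H 0 t = x ⟨(t : ℕ), h⟩)
    (hx2 : ∀ t : Fin ℓ, D ≤ (t : ℕ) → H 0 t = 0) :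
    ∑ s : Fin ℓ, H 0 s = ∑ j, x j := by
  set f : ℕ → ℝ := fun i => if h : i < D then x ⟨i, h⟩ else 0 with hf
  have h1 : ∀ s : Fin ℓ, H 0 s = f (s : ℕ) := by
    intro s
    by_cases h : (s : ℕ) < D
    · rw [hx1 s h, hf]; simp [h]
    · rw [hx2 s (le_of_not_gt h), hf]; simp [h]
  rw [Finset.sum_congr rfl fun s _ => h1 s, Fin.sum_univ_eq_sum_range f ℓ]
  rw [← Finset.sum_subset (Finset.range_subset_range.mpr hD.le)
    (fun i _ hi => by simp only [hf]; rw [dif_neg (by simpa using hi)])]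
  rw [← Fin.sum_univ_eq_sum_range f D]
  refine Finset.sum_congr rfl fun j _ => ?_
  simp only [hf]
  rw [dif_pos j.isLt]

lemma cos_indicator {ℓ D : ℕ} (hl : 0 < ℓ) (hD : D < ℓ) (t : Fin ℓ) (ht : (t : ℕ) ≠ D) :
    Real.cos ((((t : ℕ) : ℝ) - D) * (Real.pi / (2 * (ℓ : ℝ))))
      ≤ Real.cos (Real.pi / (2 * (ℓ : ℝ))) := by
  have hπ := Real.pi_pos
  have hlr : (1 : ℝ) ≤ (ℓ : ℝ) := by exact_mod_cast hl
  set Δ : ℝ := Real.pi / (2 * (ℓ : ℝ)) with hΔ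
  have hΔpos : 0 < Δ := div_pos hπ (by positivity)
  rw [← Real.cos_abs, abs_mul, abs_of_pos hΔpos]
  have habs1 : (1 : ℝ) ≤ |((t : ℕ) : ℝ) - D| := by
    have h2 : (1 : ℤ) ≤ |((t : ℕ) : ℤ) - (D : ℤ)| := by
      have hne : ((t : ℕ) : ℤ) - (D : ℤ) ≠ 0 := by
        intro h; exact ht (by omega)
      rcases hne.lt_or_gt with h | h
      · rw [abs_of_neg h]; omega
      · rw [abs_of_pos h]; omega
    have h3 : ((|((t : ℕ) : ℤ) - (D : ℤ)| : ℤ) : ℝ) = |((t : ℕ) : ℝ) - D| := by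
      push_cast [Int.cast_abs]; ring_nf
    calc (1 : ℝ) ≤ ((|((t : ℕ) : ℤ) - (D : ℤ)| : ℤ) : ℝ) := by exact_mod_cast h2
      _ = _ := h3
  refine Real.cos_le_cos_of_nonneg_of_le_pi hΔpos.le ?_ ?_
  · have habs2 : |((t : ℕ) : ℝ) - D| ≤ ℓ := by
      have h4 : ((t : ℕ) : ℝ) ≤ ℓ := by exact_mod_cast (le_of_lt t.isLt)
      have h5 : ((D : ℕ) : ℝ) ≤ ℓ := by exact_mod_cast hD.le
      have h6 : (0 : ℝ) ≤ ((t : ℕ) : ℝ) := by positivity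
      have h7 : (0 : ℝ) ≤ ((D : ℕ) : ℝ) := by positivity
      rw [abs_le]; constructor <;> linarith
    calc |((t : ℕ) : ℝ) - D| * Δ ≤ (ℓ : ℝ) * Δ :=
          mul_le_mul_of_nonneg_right habs2 hΔpos.le
      _ = Real.pi / 2 := by rw [hΔ]; field_simp
      _ ≤ Real.pi := by linarith
  · calc Δ = 1 * Δ := (one_mul Δ).symm
      _ ≤ |((t : ℕ) : ℝ) - D| * Δ := mul_le_mul_of_nonneg_right habs1 hΔpos.le

/-- Lemma: sum of tokens implemented by one transformer block. -/
theorem sum_of_tokens :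
    ∃ C : ℝ, 0 < C ∧
      ∀ (D ℓ : ℕ), D + 1 ≤ ℓ →
      ∀ M : ℝ, 0 < M →
      ∀ x : Fin D → ℝ, supNorm x ≤ M →
      ∀ H : Matrix (Fin 5) (Fin ℓ) ℝ, IsEmbed5 H →
        (∀ t : Fin ℓ, ∀ h : (t : ℕ) < D, H 0 t = x ⟨(t : ℕ), h⟩) →
        (∀ t : Fin ℓ, D ≤ (t : ℕ) → H 0 t = 0) →
        ∃ (w : ℕ) (B : Block 5 D w 6),
          B.wnorm ≤ C * (ℓ : ℝ) ^ 2 * M ^ 2 * matSup H ^ 2 ∧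
          B.eval H = Matrix.of fun (i : Fin 5) (t : Fin ℓ) =>
            if i = 0 ∧ (t : ℕ) = D then ∑ j, x j else H i t := by
  refine ⟨1, one_pos, ?_⟩
  intro D ℓ hDl M hM x hx H hH hx1 hx2
  obtain ⟨h1z, h2c, h3s, h4o⟩ := hH
  have hl : 0 < ℓ := by omega
  have hD : D < ℓ := by omega
  have hlr : (1 : ℝ) ≤ (ℓ : ℝ) := by exact_mod_cast hl
  have hms1 : (1 : ℝ) ≤ matSup H := by
    have e1 : |H 4 ⟨0, hl⟩| = 1 := by rw [h4o]; norm_num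
    calc (1 : ℝ) = |H 4 ⟨0, hl⟩| := e1.symm
      _ ≤ ⨆ j, |H 4 j| :=
          le_ciSup (f := fun j : Fin ℓ => |H 4 j|) ((Set.finite_range _).bddAbove)
            (⟨0, hl⟩ : Fin ℓ)
      _ ≤ matSup H := by
          unfold matSup
          exact le_ciSup (f := fun i : Fin 5 => ⨆ j, |H i j|)
            ((Set.finite_range _).bddAbove) (4 : Fin 5)
  have hRHS : ∀ c0 : ℝ, c0 ≤ M ^ 2 → c0 ≤ 1 * (ℓ : ℝ) ^ 2 * M ^ 2 * matSup H ^ 2 := by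
    intro c0 hc0
    have h2 : M ^ 2 ≤ (ℓ : ℝ) ^ 2 * M ^ 2 :=
      le_mul_of_one_le_left (sq_nonneg M) (by nlinarith)
    have h3 : (ℓ : ℝ) ^ 2 * M ^ 2 ≤ (ℓ : ℝ) ^ 2 * M ^ 2 * matSup H ^ 2 :=
      le_mul_of_one_le_right (by positivity) (by nlinarith)
    linarith
  rcases Nat.eq_zero_or_pos D with hD0 | hD1
  · -- trivial case D = 0
    subst hD0
    refine ⟨1, ⟨fun _ => (⟨0, 0, 0⟩ : Head 5), ⟨0, 0, 0, 0, 0, 0⟩⟩, ?_, ?_⟩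
    · refine le_trans ?_ (hRHS 0 (by positivity))
      unfold Block.wnorm FFN.wnorm
      refine sup_le (by rw [Real.iSup_of_isEmpty]) ?_
      refine sup_le (sup_le (sup_le (sup_le (sup_le ?_ ?_) ?_) ?_) ?_) ?_
      · exact matSup_le' _ 0 le_rfl (fun i j => by simp)
      · exact iSup_abs_le _ 0 le_rfl (fun i => by simp)
      · exact ciSup_le fun k => matSup_le' _ 0 le_rfl (fun i j => by simp)
      · exact ciSup_le fun k => iSup_abs_le _ 0 le_rfl (fun i => by simp)
      · exact matSup_le' _ 0 le_rfl (fun i j => by simp)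
      · exact iSup_abs_le _ 0 le_rfl (fun i => by simp)
    · have hffn0 : ∀ (y : Fin 5 → ℝ) (i : Fin 5),
          FFN.eval (⟨0, 0, 0, 0, 0, 0⟩ : FFN 5 1 6) y i = 0 := by
        intro y i
        simp [FFN.eval]
      ext i t
      simp only [Block.eval, hffn0, Matrix.add_apply, Matrix.of_apply,
        Finset.univ_eq_empty, Finset.sum_empty, Matrix.zero_apply, zero_add]
      by_cases hit : i = 0 ∧ (t : ℕ) = 0
      · rw [if_pos hit]
        obtain ⟨hi, ht⟩ := hit
        subst hi
        exact hx2 t (by omega)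
      · rw [if_neg hit]
  · -- main case 1 ≤ D
    have hπ := Real.pi_pos
    set Δ : ℝ := Real.pi / (2 * (ℓ : ℝ)) with hΔdef
    have hΔpos : 0 < Δ := div_pos hπ (by positivity)
    have hΔle : Δ ≤ Real.pi / 2 := by
      rw [hΔdef, div_le_div_iff₀ (by positivity) two_pos]
      nlinarith
    have hcΔ1 : Real.cos Δ < 1 := by
      have h := Real.cos_lt_cos_of_nonneg_of_le_pi le_rfl (by linarith) hΔpos
      simpa using h
    have hcΔ0 : 0 ≤ Real.cos Δ := Real.cos_nonneg_of_mem_Icc ⟨by linarith, hΔle⟩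
    set thD : ℝ := ((D : ℝ) + 1) * Real.pi / (2 * (ℓ : ℝ)) with hthDdef
    have hkey : ∀ t : Fin ℓ,
        Real.cos ((((t : ℕ) : ℝ) + 1) * Real.pi / (2 * (ℓ : ℝ))) * Real.cos thD
          + Real.sin ((((t : ℕ) : ℝ) + 1) * Real.pi / (2 * (ℓ : ℝ))) * Real.sin thD
          = Real.cos ((((t : ℕ) : ℝ) - D) * Δ) := by
      intro t
      rw [← Real.cos_sub]
      congr 1
      rw [hthDdef, hΔdef]
      field_simp
      ring
    set m0 : ℝ := min M 1 with hm0def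
    have hm0pos : 0 < m0 := lt_min hM one_pos
    have hm0le : m0 ≤ 1 := min_le_right M 1
    have hm0leM : m0 ≤ M := min_le_left M 1
    set k0 : ℝ := m0 ^ 2 with hk0def
    have hk0pos : 0 < k0 := by positivity
    have hk0le1 : k0 ≤ 1 := by rw [hk0def]; nlinarith [hm0pos, hm0le]
    set M1 : ℝ := max M 1 with hM1def
    have hM11 : 1 ≤ M1 := le_max_right M 1
    have hMM1 : M ≤ M1 := le_max_left M 1
    have hM1pos : 0 < M1 := by linarith
    set p : ℝ := 1 - Real.cos Δ with hpdef
    have hppos : 0 < p := by rw [hpdef]; linarith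
    have hple : p ≤ 1 := by rw [hpdef]; linarith
    set ε : ℝ := k0 * p / M1 with hεdef
    have hεpos : 0 < ε := by positivity
    have hεle : ε ≤ k0 := by
      rw [hεdef, div_le_iff₀ hM1pos]
      calc k0 * p ≤ k0 * M1 :=
            mul_le_mul_of_nonneg_left (hple.trans hM11) hk0pos.le
        _ = k0 * M1 := rfl
    have hεM : ε * M ≤ k0 * p := by
      have h1 : ε * M1 = k0 * p := by rw [hεdef]; field_simp
      calc ε * M ≤ ε * M1 := mul_le_mul_of_nonneg_left hMM1 hεpos.le
        _ = k0 * p := h1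
    set c : ℝ := k0 ^ 3 * p with hcdef
    have hcpos : 0 < c := by positivity
    have hcle1 : c ≤ 1 := by
      have hk3 : k0 ^ 3 ≤ 1 := pow_le_one₀ hk0pos.le hk0le1
      rw [hcdef]
      calc k0 ^ 3 * p ≤ 1 * 1 :=
            mul_le_mul hk3 hple hppos.le zero_le_one
        _ = 1 := one_mul 1
    set N : ℕ := ⌈(1 - c) / (k0 ^ 7 * ε * c)⌉₊ + 1 with hNdef
    have hNpos : 0 < N := Nat.succ_pos _
    have hNrpos : (0 : ℝ) < (N : ℝ) := by exact_mod_cast hNpos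
    have hNr : (1 - c) / (k0 ^ 7 * ε * c) ≤ (N : ℝ) := by
      rw [hNdef]
      push_cast
      have := Nat.le_ceil ((1 - c) / (k0 ^ 7 * ε * c))
      linarith
    set lam : ℝ := (1 - c) / ((N : ℝ) * k0 ^ 6 * ε * c) with hlamdef
    have hlam0 : 0 ≤ lam := div_nonneg (by linarith) (by positivity)
    have hlamle : lam ≤ k0 := by
      rw [hlamdef, div_le_iff₀ (by positivity)]
      calc 1 - c = ((1 - c) / (k0 ^ 7 * ε * c)) * (k0 ^ 7 * ε * c) := by field_simp
        _ ≤ (N : ℝ) * (k0 ^ 7 * ε * c) :=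
            mul_le_mul_of_nonneg_right hNr (by positivity)
        _ = k0 * ((N : ℝ) * k0 ^ 6 * ε * c) := by ring
    have hlameq : lam * ((N : ℝ) * k0 ^ 6 * ε * c) = 1 - c := by
      rw [hlamdef]
      field_simp
    set cD : ℝ := Real.cos thD with hcDdef
    set sD : ℝ := Real.sin thD with hsDdef
    set S : ℝ := ∑ j, x j with hSdef
    have hrow : ∑ s : Fin ℓ, H 0 s = S := row_sum hD x H hx1 hx2
    -- the attention head
    set A0 : Head 5 :=
      ⟨Matrix.of fun i' j => if i' = 0 then (![0, 0, k0*cD, k0*sD, -(k0*Real.cos Δ)]) j else 0,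
       Matrix.of fun i' j => if i' = 0 ∧ j = 4 then k0 else 0,
       Matrix.of fun i' j => if i' = 0 ∧ j = 0 then k0 else 0⟩ with hA0def
    have hA0e : ∀ (i : Fin 5) (t : Fin ℓ),
        A0.eval H i t = if i = 0 ∧ (t : ℕ) = D then c * S else 0 := by
      intro i t
      rw [hA0def, head_entry k0 cD sD (Real.cos Δ) H h4o i t]
      have hinner : k0*cD * H 2 t + k0*sD * H 3 t - k0*Real.cos Δ
          = k0 * (Real.cos ((((t : ℕ) : ℝ) - D) * Δ) - Real.cos Δ) := by
        rw [h2c t, h3s t, hcDdef, hsDdef]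
        linear_combination k0 * hkey t
      rw [hinner, hrow]
      by_cases ht : (t : ℕ) = D
      · have hcos1 : Real.cos ((((t : ℕ) : ℝ) - D) * Δ) = 1 := by
          rw [ht]; simp
        rw [hcos1, relu_of_nonneg (mul_nonneg hk0pos.le (mul_nonneg hk0pos.le
          (by linarith)))]
        by_cases hi : i = 0
        · rw [if_pos hi, if_pos ⟨hi, ht⟩, hcdef, hpdef]; ring
        · rw [if_neg hi, if_neg (fun hc' => hi hc'.1), zero_mul]
      · have hcle : Real.cos ((((t : ℕ) : ℝ) - D) * Δ) ≤ Real.cos Δ := by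
          have h := cos_indicator hl hD t ht
          rw [← hΔdef] at h
          exact h
        have hnp : k0 * (Real.cos ((((t : ℕ) : ℝ) - D) * Δ) - Real.cos Δ) ≤ 0 :=
          mul_nonpos_of_nonneg_of_nonpos hk0pos.le (by linarith)
        have hnp2 : k0 * (k0 * (Real.cos ((((t : ℕ) : ℝ) - D) * Δ) - Real.cos Δ)) ≤ 0 :=
          mul_nonpos_of_nonneg_of_nonpos hk0pos.le hnp
        rw [relu_of_nonpos hnp2, mul_zero, if_neg (fun hc' => ht hc'.2)]
    -- the heads family
    set heads : Fin D → Head 5 :=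
      fun j => if j = ⟨0, hD1⟩ then A0 else (⟨0, 0, 0⟩ : Head 5) with hheadsdef
    have hZ : Head.eval (⟨0, 0, 0⟩ : Head 5) H = 0 := by
      unfold Head.eval
      simp
    have hMHA : (∑ j, (heads j).eval H) = A0.eval H := by
      have h1 : ∀ j : Fin D, (heads j).eval H
          = if j = (⟨0, hD1⟩ : Fin D) then A0.eval H else 0 := by
        intro j
        simp only [hheadsdef]
        by_cases hj : j = (⟨0, hD1⟩ : Fin D)
        · rw [if_pos hj, if_pos hj]
        · rw [if_neg hj, if_neg hj, hZ]
      rw [Finset.sum_congr rfl fun j _ => h1 j]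
      simp
    -- the feed-forward network
    set Win : Matrix (Fin (N + N)) (Fin 5) ℝ :=
      Matrix.of fun j i => (![(if (j : ℕ) < N then ε else -ε), 0, k0*cD, k0*sD, -k0]) i
      with hWindef
    set Wout : Matrix (Fin 5) (Fin (N + N)) ℝ :=
      Matrix.of fun i j => if i = 0 then (if (j : ℕ) < N then lam else -lam) else 0
      with hWoutdef
    set ffn : FFN 5 (N + N) 6 := ⟨Win, 0, fun _ => k0 • 1, 0, Wout, 0⟩ with hffndef
    have hffneval : ∀ (y : Fin 5 → ℝ) (i : Fin 5),
        ffn.eval y i = ∑ j, Wout i j * (k0 ^ 6 * relu (∑ r, Win j r * y r)) := by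
      intro y i
      rw [hffndef]
      exact ffn_eval_eq k0 hk0pos.le Win Wout y i
    refine ⟨N + N, ⟨heads, ffn⟩, ?_, ?_⟩
    · -- weight bound
      refine le_trans ?_ (hRHS k0 (by
        rw [hk0def]
        exact pow_le_pow_left₀ hm0pos.le hm0leM 2))
      show ((⨆ j, (heads j).wnorm) ⊔ ffn.wnorm) ≤ k0
      have habsε : |ε| ≤ k0 := by rw [abs_of_pos hεpos]; exact hεle
      have hb2 : |k0 * cD| ≤ k0 := by
        rw [abs_mul, abs_of_pos hk0pos]
        exact mul_le_of_le_one_right hk0pos.le (by rw [hcDdef]; exact Real.abs_cos_le_one thD)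
      have hb3 : |k0 * sD| ≤ k0 := by
        rw [abs_mul, abs_of_pos hk0pos]
        exact mul_le_of_le_one_right hk0pos.le (by rw [hsDdef]; exact Real.abs_sin_le_one thD)
      have hb4 : |-(k0 * Real.cos Δ)| ≤ k0 := by
        rw [abs_neg, abs_mul, abs_of_pos hk0pos]
        exact mul_le_of_le_one_right hk0pos.le (Real.abs_cos_le_one Δ)
      have hb5 : |-k0| ≤ k0 := by rw [abs_neg, abs_of_pos hk0pos]
      have hbk0 : |k0| ≤ k0 := le_of_eq (abs_of_pos hk0pos)
      have hblam : |lam| ≤ k0 := by rw [abs_of_nonneg hlam0]; exact hlamle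
      refine sup_le ?_ ?_
      · have : Nonempty (Fin D) := ⟨⟨0, hD1⟩⟩
        refine ciSup_le fun j => ?_
        simp only [hheadsdef]
        by_cases hj : j = (⟨0, hD1⟩ : Fin D)
        · rw [if_pos hj]
          show (matSup _ ⊔ matSup _ ⊔ matSup _) ≤ k0
          rw [hA0def]
          refine sup_le (sup_le ?_ ?_) ?_
          · refine matSup_le' _ k0 hk0pos.le fun i' j' => ?_
            by_cases hi : i' = 0
            · subst hi
              fin_cases j'
              · simpa using hk0pos.le
              · simpa using hk0pos.le
              · simpa using hb2
              · simpa using hb3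
              · simpa using hb4
            · simp [hi, hk0pos.le]
          · refine matSup_le' _ k0 hk0pos.le fun i' j' => ?_
            by_cases hij : i' = 0 ∧ j' = 4
            · simp [hij, hbk0]
            · simp [hij, hk0pos.le]
          · refine matSup_le' _ k0 hk0pos.le fun i' j' => ?_
            by_cases hij : i' = 0 ∧ j' = 0
            · simp [hij, hbk0]
            · simp [hij, hk0pos.le]
        · rw [if_neg hj]
          show (matSup (0 : Matrix (Fin 5) (Fin 5) ℝ) ⊔ matSup 0 ⊔ matSup 0) ≤ k0
          have hmz : matSup (0 : Matrix (Fin 5) (Fin 5) ℝ) ≤ k0 :=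
            matSup_le' _ k0 hk0pos.le (fun i' j' => by simp [hk0pos.le])
          exact sup_le (sup_le hmz hmz) hmz
      · show (matSup Win ⊔ _ ⊔ _ ⊔ _ ⊔ matSup Wout ⊔ _) ≤ k0
        refine sup_le (sup_le (sup_le (sup_le (sup_le ?_ ?_) ?_) ?_) ?_) ?_
        · refine matSup_le' _ k0 hk0pos.le fun j i => ?_
          rw [hWindef]
          simp only [Matrix.of_apply]
          fin_cases i
          · by_cases hj : (j : ℕ) < N
            · simpa [hj] using habsε
            · simpa [hj, abs_neg] using habsε
          · simpa using hk0pos.le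
          · simpa using hb2
          · simpa using hb3
          · simpa using hb5
        · exact iSup_abs_le _ k0 hk0pos.le (fun i => by simp [hffndef, hk0pos.le])
        · refine ciSup_le fun k => matSup_le' _ k0 hk0pos.le fun i j => ?_
          by_cases hij : i = j
          · simp [hffndef, Matrix.one_apply, hij, abs_of_pos hk0pos, hk0pos.le]
          · simp [hffndef, Matrix.one_apply, hij, hk0pos.le]
        · exact ciSup_le fun k => iSup_abs_le _ k0 hk0pos.le (fun i => by simp [hffndef, hk0pos.le])
        · refine matSup_le' _ k0 hk0pos.le fun i j => ?_
          rw [hWoutdef]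
          by_cases hi : i = 0
          · by_cases hj : (j : ℕ) < N
            · simp only [Matrix.of_apply, hi, if_true, hj]
              simpa [hj] using hblam
            · simp only [Matrix.of_apply, hi, if_true]
              simpa [hj, abs_neg] using hblam
          · simp [hi, hk0pos.le]
        · exact iSup_abs_le _ k0 hk0pos.le (fun i => by simp [hffndef, hk0pos.le])
    · -- evaluation
      have hBeval : Block.eval ⟨heads, ffn⟩ H
          = Matrix.of (fun i t => ffn.eval (fun r => (A0.eval H + H) r t) i)
            + (A0.eval H + H) := by
        show Matrix.of (fun i t => ffn.eval (fun r => ((∑ j, (heads j).eval H) + H) r t) i)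
            + ((∑ j, (heads j).eval H) + H) = _
        rw [hMHA]
      rw [hBeval]
      have hin : ∀ (t : Fin ℓ) (j : Fin (N + N)),
          (∑ r, Win j r * ((A0.eval H + H) r t))
            = (if (j : ℕ) < N then ε else -ε) * ((if (t : ℕ) = D then c * S else 0) + H 0 t)
              + k0 * (Real.cos ((((t : ℕ) : ℝ) - D) * Δ) - 1) := by
        intro t j
        have e0 : (A0.eval H) 0 t = (if (t : ℕ) = D then c * S else 0) := by
          rw [hA0e]; simp
        have e1 : (A0.eval H) 1 t = 0 := by rw [hA0e]; simp
        have e2 : (A0.eval H) 2 t = 0 := by rw [hA0e]; simp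
        have e3 : (A0.eval H) 3 t = 0 := by rw [hA0e]; simp
        have e4 : (A0.eval H) 4 t = 0 := by rw [hA0e]; simp
        rw [Fin.sum_univ_five]
        simp only [hWindef, Matrix.of_apply, Matrix.add_apply, e0, e1, e2, e3, e4]
        simp only [Matrix.cons_val_zero, Matrix.cons_val_one, Matrix.head_cons]
        simp [h1z t, h2c t, h3s t, h4o t]
        linear_combination k0 * hkey t
      have hrelu0 : ∀ (t : Fin ℓ), (t : ℕ) ≠ D → ∀ j : Fin (N + N),
          relu (∑ r, Win j r * ((A0.eval H + H) r t)) = 0 := by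
        intro t ht j
        rw [hin t j, if_neg ht]
        apply relu_of_nonpos
        have hcle : Real.cos ((((t : ℕ) : ℝ) - D) * Δ) ≤ Real.cos Δ := by
          have h := cos_indicator hl hD t ht
          rw [← hΔdef] at h
          exact h
        have habsH0 : |H 0 t| ≤ M := by
          by_cases h : (t : ℕ) < D
          · rw [hx1 t h]
            refine le_trans ?_ hx
            unfold supNorm
            exact le_ciSup (f := fun i : Fin D => |x i|)
              ((Set.finite_range _).bddAbove) (⟨(t : ℕ), h⟩ : Fin D)
          · rw [hx2 t (le_of_not_gt h)]
            simp [hM.le]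
        have he : (if (j : ℕ) < N then ε else -ε) * (0 + H 0 t) ≤ ε * M := by
          have h8 : |(if (j : ℕ) < N then ε else -ε) * (0 + H 0 t)| ≤ ε * M := by
            rw [abs_mul]
            refine mul_le_mul ?_ (by simpa using habsH0) (abs_nonneg _) hεpos.le
            by_cases hj : (j : ℕ) < N
            · rw [if_pos hj, abs_of_pos hεpos]
            · rw [if_neg hj, abs_neg, abs_of_pos hεpos]
          exact le_trans (le_abs_self _) h8
        have h9 : k0 * (Real.cos ((((t : ℕ) : ℝ) - D) * Δ) - 1) ≤ k0 * (-p) := by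
          refine mul_le_mul_of_nonneg_left ?_ hk0pos.le
          rw [hpdef]
          linarith
        have hne : k0 * (-p) = -(k0 * p) := by ring
        linarith [he, h9, hεM, hne]
      ext i t
      rw [Matrix.add_apply, Matrix.of_apply, Matrix.of_apply, hffneval, Matrix.add_apply,
        hA0e]
      by_cases ht : (t : ℕ) = D
      · have hH0t : H 0 t = 0 := hx2 t (by omega)
        by_cases hi : i = 0
        · rw [if_pos ⟨hi, ht⟩, if_pos ⟨hi, ht⟩]
          subst hi
          have hterm : ∀ j : Fin (N + N),
              Wout 0 j * (k0 ^ 6 * relu (∑ r, Win j r * ((A0.eval H + H) r t)))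
                = if (j : ℕ) < N then lam * (k0 ^ 6 * relu (ε * (c * S)))
                  else (-lam) * (k0 ^ 6 * relu (-(ε * (c * S)))) := by
            intro j
            have hcos1 : Real.cos ((((t : ℕ) : ℝ) - D) * Δ) = 1 := by
              rw [ht]; simp
            have hWoutv : Wout 0 j = (if (j : ℕ) < N then lam else -lam) := by
              rw [hWoutdef]; simp
            rw [hin t j, if_pos ht, hcos1, hH0t, hWoutv]
            by_cases hj : (j : ℕ) < N
            · simp only [hj, if_true]
              have harg : ε * (c * S + 0) + k0 * (1 - 1) = ε * (c * S) := by ring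
              rw [harg]
            · simp only [hj, if_false]
              have harg : -ε * (c * S + 0) + k0 * (1 - 1) = -(ε * (c * S)) := by ring
              rw [harg]
          rw [Finset.sum_congr rfl fun j _ => hterm j, sum_split, hH0t]
          have hfin : (N : ℝ) * (lam * (k0 ^ 6 * relu (ε * (c * S))))
              + (N : ℝ) * ((-lam) * (k0 ^ 6 * relu (-(ε * (c * S))))) = (1 - c) * S := by
            calc (N : ℝ) * (lam * (k0 ^ 6 * relu (ε * (c * S))))
                  + (N : ℝ) * ((-lam) * (k0 ^ 6 * relu (-(ε * (c * S)))))
                = (N : ℝ) * lam * k0 ^ 6 * (relu (ε * (c * S)) - relu (-(ε * (c * S)))) := by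
                  ring
              _ = (N : ℝ) * lam * k0 ^ 6 * (ε * (c * S)) := by rw [relu_sub_neg]
              _ = (1 - c) * S := by linear_combination S * hlameq
          rw [hfin]
          ring
        · rw [if_neg (fun hc' => hi hc'.1), if_neg (fun hc' => hi hc'.1)]
          have hzero : ∀ j : Fin (N + N),
              Wout i j * (k0 ^ 6 * relu (∑ r, Win j r * ((A0.eval H + H) r t))) = 0 := by
            intro j
            rw [hWoutdef]
            simp [hi]
          rw [Finset.sum_congr rfl fun j _ => hzero j]
          simp
      · rw [if_neg (fun hc' => ht hc'.2), if_neg (fun hc' => ht hc'.2)]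
        have hzero : ∀ j : Fin (N + N),
            Wout i j * (k0 ^ 6 * relu (∑ r, Win j r * ((A0.eval H + H) r t))) = 0 := by
          intro j
          rw [hrelu0 t ht j]
          ring
        rw [Finset.sum_congr rfl fun j _ => hzero j]
        simp
end
end Paper
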